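/- Let A_1, …, A_k be weakly acyclic automata over a common alphabet Σ, each equipped with an initial state and a set of accepting states, where A_i has n_i states. If there exists a word accepted by all of A_1, …, A_k, then there exists such a word of length at most (n_1 − 1) + (n_2 − 1) + ⋯ + (n_k − 1). -/

import Mathlib

/-- The extension of the transition function to words. -/
def deltaStar {Q A : Type*} (δ : Q → A → Q) (q : Q) (w : List A) : Q := w.foldl δ q

/-- A simple cycle: pairwise distinct states `q 0, …, q (k-1)` together with letters
mapping each state of the cycle to the next one (cyclically). -/
def IsSimpleCycle {Q A : Type*} (δ : Q → A → Q) (k : ℕ) (q : Fin k → Q) : Prop :=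
  0 < k ∧ Function.Injective q ∧
    ∃ x : Fin k → A, ∀ i : Fin k, δ (q i) (x i) = q ⟨(i.val + 1) % k, Nat.mod_lt _ i.pos⟩

/-- An automaton is weakly acyclic if all its simple cycles are self-loops. -/
def WeaklyAcyclic {Q A : Type*} (δ : Q → A → Q) : Prop :=
  ∀ (k : ℕ) (q : Fin k → Q), IsSimpleCycle δ k q → k = 1

/-- A sink state is fixed by every letter. -/
def IsSink {Q A : Type*} (δ : Q → A → Q) (q : Q) : Prop := ∀ x : A, δ q x = q

/-- The word `w` synchronizes the set `S` of states. -/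
def SyncsSet {Q A : Type*} (δ : Q → A → Q) (S : Finset Q) (w : List A) : Prop :=
  ∃ q : Q, ∀ s ∈ S, deltaStar δ s w = q

/-- A set of states is synchronizing if some word synchronizes it. -/
def IsSyncSet {Q A : Type*} (δ : Q → A → Q) (S : Finset Q) : Prop :=
  ∃ w : List A, SyncsSet δ S w

/-- The rank of a word with respect to an automaton: the size of the image of the
state set under the word. -/
def wordRank {Q A : Type*} [Fintype Q] [DecidableEq Q] (δ : Q → A → Q) (w : List A) : ℕ :=
  (Finset.univ.image fun q => deltaStar δ q w).card

/-- The rank of an automaton: the minimum rank of a word with respect to it. -/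
noncomputable def autRank {Q A : Type*} [Fintype Q] [DecidableEq Q] (δ : Q → A → Q) : ℕ :=
  sInf {r | ∃ w : List A, wordRank δ w = r}

/-- The rank of a word with respect to a subset of states. -/
def subsetWordRank {Q A : Type*} [DecidableEq Q] (δ : Q → A → Q) (S : Finset Q)
    (w : List A) : ℕ :=
  (S.image fun q => deltaStar δ q w).card

/-- The rank of a subset of states: the minimum rank of a word with respect to it. -/
noncomputable def subsetRank {Q A : Type*} [DecidableEq Q] (δ : Q → A → Q) (S : Finset Q) : ℕ :=
  sInf {r | ∃ w : List A, subsetWordRank δ S w = r}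

/-- `w^j`: the word obtained by `j` concatenations of `w`. -/
def wordPow {A : Type*} (w : List A) (j : ℕ) : List A := (List.replicate j w).flatten

lemma deltaStar_append' {Q A : Type*} (δ : Q → A → Q) (q : Q) (u v : List A) :
    deltaStar δ q (u ++ v) = deltaStar δ (deltaStar δ q u) v :=
  List.foldl_append

lemma deltaStar_take_succ {Q A : Type*} (δ : Q → A → Q) (q : Q) (u : List A)
    (j : ℕ) (hj : j < u.length) :
    deltaStar δ q (u.take (j + 1)) = δ (deltaStar δ q (u.take j)) u[j] := by
  rw [List.take_succ, List.getElem?_eq_getElem hj, deltaStar_append']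
  rfl

/-- In a weakly acyclic automaton, one cannot return to a state after leaving it. -/
lemma no_return {Q A : Type*} (δ : Q → A → Q) (hwa : WeaklyAcyclic δ) (n : ℕ) :
    ∀ (u : List A), u.length ≤ n → ∀ (q q' : Q) (x : A), q ≠ q' → δ q x = q' →
      deltaStar δ q' u = q → False := by
  induction n with
  | zero =>
    intro u hu q q' x hne hx hd
    rw [List.length_eq_zero_iff.mp (Nat.le_zero.mp hu)] at hd
    exact hne hd.symm
  | succ n ih =>
    intro u hu q q' x hne hx hd
    rcases Nat.eq_zero_or_pos u.length with hm | hm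
    · rw [List.length_eq_zero_iff.mp hm] at hd
      exact hne hd.symm
    set m := u.length with hmdef
    set s : ℕ → Q := fun i => deltaStar δ q' (u.take i) with hs
    set c : Fin (m + 1) → Q := fun i => if i.val = 0 then q else s (i.val - 1) with hc
    by_cases hinj : Function.Injective c
    · -- build a simple cycle of length m + 1 ≥ 2
      have key : ∀ (v : ℕ) (p : v < m + 1), c ⟨v, p⟩ = if v = 0 then q else s (v - 1) :=
        fun v p => rfl
      have hcyc : IsSimpleCycle δ (m + 1) c := by
        refine ⟨Nat.succ_pos m, hinj, ?_⟩
        refine ⟨fun i => if h : i.val = 0 then x else u.get ⟨i.val - 1, by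
          have := i.isLt; omega⟩, ?_⟩
        rintro ⟨iv, hiv⟩
        simp only [key]
        by_cases h0 : iv = 0
        · subst h0
          have hmod : (0 + 1) % (m + 1) = 1 := Nat.mod_eq_of_lt (by omega)
          rw [hmod, dif_pos rfl, if_pos rfl, if_neg (by omega : ¬ (1:ℕ) = 0)]
          have : s (1 - 1) = q' := by simp [hs, deltaStar]
          rw [this, hx]
        · rw [dif_neg h0, if_neg h0]
          have hlt : iv - 1 < m := by omega
          have hstep : δ (s (iv - 1)) (u.get ⟨iv - 1, hlt⟩) = s (iv - 1 + 1) := by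
            rw [hs]
            simp only [List.get_eq_getElem]
            exact (deltaStar_take_succ δ q' u _ hlt).symm
          by_cases hlast : iv = m
          · have hmod : (iv + 1) % (m + 1) = 0 := by rw [hlast]; simp
            rw [hmod, if_pos rfl, hstep]
            have h1 : iv - 1 + 1 = m := by omega
            rw [h1, hs]
            show deltaStar δ q' (u.take m) = q
            rw [hmdef, List.take_length]
            exact hd
          · have hmod : (iv + 1) % (m + 1) = iv + 1 := Nat.mod_eq_of_lt (by omega)
            rw [hmod, if_neg (by omega : ¬ iv + 1 = 0)]
            have h1 : iv + 1 - 1 = iv - 1 + 1 := by omega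
            rw [h1]
            exact hstep
      have := hwa (m + 1) c hcyc
      omega
    · -- not injective: shorten the walk and apply induction hypothesis
      rw [Function.not_injective_iff] at hinj
      obtain ⟨a, b, hab, hne'⟩ := hinj
      -- wlog a.val < b.val
      wlog hlt : a.val < b.val generalizing a b
      · exact this b a hab.symm (fun h => hne' h.symm) (by
          have : a.val ≠ b.val := fun h => hne' (Fin.ext h); omega)
      by_cases ha0 : a.val = 0
      · -- q = s (b.val - 1) : a shorter walk from q' to q
        have hb0 : b.val ≠ 0 := by omega
        have hq : s (b.val - 1) = q := by
          have := hab
          simp only [hc, if_pos ha0, if_neg hb0] at this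
          exact this.symm
        have hlen : (u.take (b.val - 1)).length ≤ n := by
          simp only [List.length_take]
          have := b.isLt; omega
        exact ih (u.take (b.val - 1)) hlen q q' x hne hx hq
      · have hb0 : b.val ≠ 0 := by omega
        set i := a.val - 1
        set j := b.val - 1
        have hij : i < j := by omega
        have hjm : j ≤ m - 1 := by have := b.isLt; omega
        have hsij : s i = s j := by
          have := hab
          simp only [hc, if_neg ha0, if_neg hb0] at this
          exact this
        set u' := u.take i ++ u.drop j with hu'
        have hd' : deltaStar δ q' u' = q := by
          rw [hu', deltaStar_append']
          show deltaStar δ (s i) (u.drop j) = q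
          rw [hsij]
          show deltaStar δ (deltaStar δ q' (u.take j)) (u.drop j) = q
          rw [← deltaStar_append', List.take_append_drop]
          exact hd
        have hlen : u'.length ≤ n := by
          simp only [hu', List.length_append, List.length_take, List.length_drop]
          omega
        exact ih u' hlen q q' x hne hx hd'

/-- The set of states reachable from `q`. -/
def reachSet {Q A : Type*} (δ : Q → A → Q) (q : Q) : Set Q :=
  {p | ∃ w : List A, deltaStar δ q w = p}

/-- The number of states reachable from `q`. -/
noncomputable def reachCard {Q A : Type*} (δ : Q → A → Q) (q : Q) : ℕ :=
  Set.ncard (reachSet δ q)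

lemma self_mem_reachSet {Q A : Type*} (δ : Q → A → Q) (q : Q) : q ∈ reachSet δ q :=
  ⟨[], rfl⟩

lemma reachSet_step_subset {Q A : Type*} (δ : Q → A → Q) (q : Q) (x : A) :
    reachSet δ (δ q x) ⊆ reachSet δ q := by
  rintro p ⟨w, hw⟩
  exact ⟨x :: w, hw⟩

lemma reachCard_pos {Q A : Type*} [Fintype Q] (δ : Q → A → Q) (q : Q) :
    1 ≤ reachCard δ q :=
  (Set.ncard_pos (Set.toFinite _)).mpr ⟨q, self_mem_reachSet δ q⟩

lemma reachCard_le_card {Q A : Type*} [Fintype Q] (δ : Q → A → Q) (q : Q) :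
    reachCard δ q ≤ Fintype.card Q := by
  have := Set.ncard_le_ncard (Set.subset_univ (reachSet δ q)) Set.finite_univ
  rwa [Set.ncard_univ, Nat.card_eq_fintype_card] at this

lemma reachCard_step_lt {Q A : Type*} [Fintype Q] (δ : Q → A → Q)
    (hwa : WeaklyAcyclic δ) (q : Q) (x : A) (hne : δ q x ≠ q) :
    reachCard δ (δ q x) < reachCard δ q := by
  apply Set.ncard_lt_ncard _ (Set.toFinite _)
  constructor
  · exact reachSet_step_subset δ q x
  · intro hsub
    obtain ⟨w, hw⟩ := hsub (self_mem_reachSet δ q)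
    exact no_return δ hwa w.length w le_rfl q (δ q x) x (Ne.symm hne) rfl hw

lemma reachCard_step_le {Q A : Type*} [Fintype Q] (δ : Q → A → Q)
    (hwa : WeaklyAcyclic δ) (q : Q) (x : A) :
    reachCard δ (δ q x) ≤ reachCard δ q := by
  by_cases h : δ q x = q
  · rw [h]
  · exact le_of_lt (reachCard_step_lt δ hwa q x h)

/-- Core shortening lemma: any word can be replaced by a word whose length is
bounded by the drop in total reach-card, reaching the same final states. -/
lemma shorten {A : Type*} (k : ℕ) (Q : Fin k → Type*) [∀ i, Fintype (Q i)]
    (δ : ∀ i, Q i → A → Q i) (hwa : ∀ i, WeaklyAcyclic (δ i)) :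
    ∀ (w : List A) (q0 : ∀ i, Q i),
      ∃ w' : List A,
        w'.length + ∑ i, reachCard (δ i) (deltaStar (δ i) (q0 i) w)
          ≤ ∑ i, reachCard (δ i) (q0 i) ∧
        ∀ i, deltaStar (δ i) (q0 i) w' = deltaStar (δ i) (q0 i) w := by
  intro w
  induction w with
  | nil => intro q0; exact ⟨[], by simp [deltaStar], fun i => rfl⟩
  | cons a t ih =>
    intro q0
    set q1 : ∀ i, Q i := fun i => δ i (q0 i) a with hq1
    have hstep : ∀ i, deltaStar (δ i) (q0 i) (a :: t) = deltaStar (δ i) (q1 i) t :=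
      fun i => rfl
    by_cases hall : ∀ i, q1 i = q0 i
    · obtain ⟨w', hw1, hw2⟩ := ih q0
      refine ⟨w', ?_, ?_⟩
      · have : ∀ i, deltaStar (δ i) (q0 i) (a :: t) = deltaStar (δ i) (q0 i) t := by
          intro i; rw [hstep i, hall i]
        calc w'.length + ∑ i, reachCard (δ i) (deltaStar (δ i) (q0 i) (a :: t))
            = w'.length + ∑ i, reachCard (δ i) (deltaStar (δ i) (q0 i) t) := by
              congr 1; exact Finset.sum_congr rfl fun i _ => by rw [this i]
          _ ≤ ∑ i, reachCard (δ i) (q0 i) := hw1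
      · intro i
        rw [hw2 i, hstep i, hall i]
    · push_neg at hall
      obtain ⟨i0, hi0⟩ := hall
      obtain ⟨w', hw1, hw2⟩ := ih q1
      refine ⟨a :: w', ?_, ?_⟩
      · have hsumlt : ∑ i, reachCard (δ i) (q1 i) < ∑ i, reachCard (δ i) (q0 i) := by
          apply Finset.sum_lt_sum
          · intro i _; exact reachCard_step_le (δ i) (hwa i) (q0 i) a
          · exact ⟨i0, Finset.mem_univ i0,
              reachCard_step_lt (δ i0) (hwa i0) (q0 i0) a hi0⟩
        have : ∀ i, deltaStar (δ i) (q0 i) (a :: t) = deltaStar (δ i) (q1 i) t := hstep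
        simp only [List.length_cons]
        calc w'.length + 1 + ∑ i, reachCard (δ i) (deltaStar (δ i) (q0 i) (a :: t))
            = (w'.length + ∑ i, reachCard (δ i) (deltaStar (δ i) (q1 i) t)) + 1 := by
              rw [Finset.sum_congr rfl fun i _ => by rw [this i]]; ring
          _ ≤ ∑ i, reachCard (δ i) (q1 i) + 1 := by omega
          _ ≤ ∑ i, reachCard (δ i) (q0 i) := by omega
      · intro i
        show deltaStar (δ i) (q1 i) w' = _
        rw [hw2 i, hstep i]

/-- If weakly acyclic automata `A_1, …, A_k` over a common alphabet (with initial and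
accepting states, `A_i` having `n_i` states) accept a common word, then they accept a
common word of length at most `(n_1 - 1) + ⋯ + (n_k - 1)`. -/
theorem stmt18 {A : Type*} [Fintype A] (k : ℕ) (Q : Fin k → Type*)
    [∀ i, Fintype (Q i)] (δ : ∀ i, Q i → A → Q i)
    (hwa : ∀ i, WeaklyAcyclic (δ i)) (q0 : ∀ i, Q i) (F : ∀ i, Set (Q i))
    (h : ∃ w : List A, ∀ i, deltaStar (δ i) (q0 i) w ∈ F i) :
    ∃ w : List A, w.length ≤ ∑ i : Fin k, (Fintype.card (Q i) - 1) ∧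
      ∀ i, deltaStar (δ i) (q0 i) w ∈ F i := by
  obtain ⟨w, hw⟩ := h
  obtain ⟨w', hlen, hend⟩ := shorten k Q δ hwa w q0
  refine ⟨w', ?_, fun i => by rw [hend i]; exact hw i⟩
  have h1 : ∑ i, reachCard (δ i) (q0 i) ≤
      ∑ i : Fin k, ((Fintype.card (Q i) - 1) +
        reachCard (δ i) (deltaStar (δ i) (q0 i) w)) := by
    apply Finset.sum_le_sum
    intro i _
    have ha := reachCard_le_card (δ i) (q0 i)
    have hb := reachCard_pos (δ i) (deltaStar (δ i) (q0 i) w)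
    have hc : 1 ≤ Fintype.card (Q i) := Fintype.card_pos_iff.mpr ⟨q0 i⟩
    omega
  rw [Finset.sum_add_distrib] at h1
  omega
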